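/- Shallow scalar ReLU networks are universal approximators of C([0,1]) in the supremum norm: for every continuous function f : [0,1] → ℝ and every ε > 0 there exist N ∈ ℕ and parameters a, b, c : Fin N → ℝ such that for all x ∈ [0,1], |f(x) − Σ_{i=1}^{N} c_i · max(a_i x + b_i, 0)| < ε. -/

import Mathlib

/-- Shallow scalar ReLU networks are universal approximators of `C([0,1])` in the
supremum norm. -/
theorem shallow_relu_universal
    (f : ℝ → ℝ) (hf : ContinuousOn f (Set.Icc (0 : ℝ) 1))
    (ε : ℝ) (hε : 0 < ε) :
    ∃ (N : ℕ) (a b c : Fin N → ℝ),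
      ∀ x ∈ Set.Icc (0 : ℝ) 1,
        |f x - ∑ i : Fin N, c i * max (a i * x + b i) 0| < ε := by
  obtain ⟨δ, hδ, hδf⟩ := Metric.uniformContinuousOn_iff.mp
    (isCompact_Icc.uniformContinuousOn_of_continuous hf) (ε/2) (by positivity)
  obtain ⟨n, hn⟩ := exists_nat_one_div_lt hδ
  set m : ℕ := n + 1 with hm
  have hmpos : (0:ℝ) < m := by positivity
  have hmne : (m:ℝ) ≠ 0 := ne_of_gt hmpos
  have hmδ : 1 / (m:ℝ) < δ := by
    have : ((n:ℝ) + 1) = (m:ℝ) := by push_cast [hm]; ring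
    rwa [this] at hn
  -- slopes and coefficients
  set s : ℕ → ℝ := fun k => (m:ℝ) * (f ((k+1)/m) - f (k/m)) with hs
  set d : ℕ → ℝ := fun k => if k = 0 then s 0 else s k - s (k-1) with hd
  -- closed form of the partial PL sum
  have key : ∀ (j : ℕ) (x : ℝ),
      ∑ k ∈ Finset.range (j+1), d k * (x - k/m)
        = s j * (x - j/m) + (f (j/m) - f 0) := by
    intro j
    induction j with
    | zero => intro x; simp [hd]
    | succ j ih =>
        intro x
        rw [Finset.sum_range_succ, ih]
        have hdj : d (j+1) = s (j+1) - s j := by simp [hd]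
        rw [hdj, hs]
        push_cast
        field_simp
        ring
  -- truncation of the ReLU sum
  have trunc : ∀ (x : ℝ) (j : ℕ), j < m → (j:ℝ)/m ≤ x → x ≤ ((j:ℝ)+1)/m →
      ∑ k ∈ Finset.range m, d k * max (x - k/m) 0
        = ∑ k ∈ Finset.range (j+1), d k * (x - k/m) := by
    intro x j hjm hjx hxj
    rw [← Finset.sum_subset (Finset.range_mono hjm)]
    · apply Finset.sum_congr rfl
      intro k hk
      have hk' : k ≤ j := Nat.lt_succ_iff.mp (Finset.mem_range.mp hk)
      have : (k:ℝ)/m ≤ x := le_trans (by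
        gcongr <;> exact_mod_cast hk') hjx
      rw [max_eq_left (by linarith)]
    · intro k _ hk
      have hk' : j + 1 ≤ k := Nat.not_lt.mp (fun h => hk (Finset.mem_range.mpr h))
      have : x ≤ (k:ℝ)/m := le_trans hxj (by
        gcongr <;> exact_mod_cast hk')
      rw [max_eq_right (by linarith), mul_zero]
  -- the network
  refine ⟨m + 1, Fin.cons 0 (fun _ => 1), Fin.cons 1 (fun i : Fin m => -((i:ℕ):ℝ)/m),
    Fin.cons (f 0) (fun i : Fin m => d i), ?_⟩
  intro x hx
  obtain ⟨hx0, hx1⟩ := hx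
  have hnet : ∑ i : Fin (m+1),
      (Fin.cons (f 0) (fun i : Fin m => d i) : Fin (m+1) → ℝ) i *
        max ((Fin.cons 0 (fun _ => 1) : Fin (m+1) → ℝ) i * x +
          (Fin.cons 1 (fun i : Fin m => -((i:ℕ):ℝ)/m) : Fin (m+1) → ℝ) i) 0
      = f 0 + ∑ k ∈ Finset.range m, d k * max (x - k/m) 0 := by
    rw [Fin.sum_univ_succ]
    simp only [Fin.cons_zero, Fin.cons_succ, zero_mul, zero_add, one_mul]
    rw [Fin.sum_univ_eq_sum_range (fun k => d k * max (x + -((k:ℕ):ℝ)/m) 0)]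
    norm_num
    apply Finset.sum_congr rfl
    intro k _
    ring_nf
  rw [hnet]
  -- choose the interval index
  set j : ℕ := min (⌊(m:ℝ)*x⌋₊) (m-1) with hj
  have hjm : j < m := lt_of_le_of_lt (min_le_right _ _) (Nat.sub_lt (Nat.succ_pos n) one_pos)
  have hjx : (j:ℝ)/m ≤ x := by
    have h1 : (j:ℝ) ≤ ⌊(m:ℝ)*x⌋₊ := by exact_mod_cast min_le_left _ _
    have h2 : (⌊(m:ℝ)*x⌋₊ : ℝ) ≤ (m:ℝ)*x := Nat.floor_le (by positivity)
    rw [div_le_iff₀ hmpos]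
    linarith [mul_comm (m:ℝ) x]
  have hxj : x ≤ ((j:ℝ)+1)/m := by
    rcases le_or_gt (⌊(m:ℝ)*x⌋₊) (m-1) with h | h
    · have hjeq : j = ⌊(m:ℝ)*x⌋₊ := min_eq_left h
      have h2 : (m:ℝ)*x < ⌊(m:ℝ)*x⌋₊ + 1 := Nat.lt_floor_add_one _
      have hjc : (j:ℝ) = (⌊(m:ℝ)*x⌋₊ : ℝ) := by exact_mod_cast hjeq
      rw [le_div_iff₀ hmpos, hjc]
      linarith [mul_comm (m:ℝ) x]
    · have hjeq : j = m - 1 := min_eq_right (le_of_lt h)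
      have : (j:ℝ) + 1 = (m:ℝ) := by
        rw [hjeq]
        have : m - 1 + 1 = m := Nat.succ_pred_eq_of_pos (Nat.succ_pos n)
        exact_mod_cast congrArg (Nat.cast : ℕ → ℝ) this
      rw [this, le_div_iff₀ hmpos]
      nlinarith
  rw [trunc x j hjm hjx hxj, key j x]
  -- estimates
  have hjm1 : (j:ℝ)/m ∈ Set.Icc (0:ℝ) 1 := by
    constructor
    · positivity
    · rw [div_le_one hmpos]; exact_mod_cast le_of_lt hjm
  have hjm2 : ((j:ℝ)+1)/m ∈ Set.Icc (0:ℝ) 1 := by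
    constructor
    · positivity
    · rw [div_le_one hmpos]
      have : (j:ℝ) + 1 ≤ m := by exact_mod_cast hjm
      linarith
  have hest1 : |f x - f ((j:ℝ)/m)| < ε/2 := by
    have := hδf x ⟨hx0, hx1⟩ ((j:ℝ)/m) hjm1 (by
      rw [Real.dist_eq]
      rw [abs_of_nonneg (by linarith)]
      have hsplit : ((j:ℝ)+1)/m = (j:ℝ)/m + 1/m := by ring
      have : x - (j:ℝ)/m ≤ 1/m := by
        rw [hsplit] at hxj; linarith
      linarith)
    rwa [Real.dist_eq] at this
  have hest2 : |f (((j:ℝ)+1)/m) - f ((j:ℝ)/m)| < ε/2 := by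
    have := hδf (((j:ℝ)+1)/m) hjm2 ((j:ℝ)/m) hjm1 (by
      rw [Real.dist_eq]
      have : ((j:ℝ)+1)/m - (j:ℝ)/m = 1/m := by field_simp; ring
      rw [show ((j:ℝ)+1)/m - (j:ℝ)/m = 1/m by field_simp; ring]
      rw [abs_of_nonneg (by positivity)]
      exact hmδ)
    rwa [Real.dist_eq] at this
  -- combine
  have ht0 : 0 ≤ (m:ℝ)*(x - (j:ℝ)/m) :=
    mul_nonneg hmpos.le (by linarith)
  have ht1 : (m:ℝ)*(x - (j:ℝ)/m) ≤ 1 := by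
    have h1 := hxj
    rw [le_div_iff₀ hmpos] at h1
    have h2 : (m:ℝ)*(x - (j:ℝ)/m) = m*x - j := by field_simp
    rw [h2]
    linarith [mul_comm (m:ℝ) x]
  have hsj : s j * (x - (j:ℝ)/m)
      = (f (((j:ℝ)+1)/m) - f ((j:ℝ)/m)) * ((m:ℝ)*(x - (j:ℝ)/m)) := by
    rw [hs]; push_cast; ring
  have habs : |s j * (x - (j:ℝ)/m)| < ε/2 := by
    rw [hsj, abs_mul, abs_of_nonneg ht0]
    calc |f (((j:ℝ)+1)/m) - f ((j:ℝ)/m)| * ((m:ℝ)*(x - (j:ℝ)/m))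
        ≤ |f (((j:ℝ)+1)/m) - f ((j:ℝ)/m)| * 1 :=
          mul_le_mul_of_nonneg_left ht1 (abs_nonneg _)
      _ = |f (((j:ℝ)+1)/m) - f ((j:ℝ)/m)| := mul_one _
      _ < ε/2 := hest2
  have : f x - (f 0 + (s j * (x - (j:ℝ)/m) + (f ((j:ℝ)/m) - f 0)))
      = (f x - f ((j:ℝ)/m)) - s j * (x - (j:ℝ)/m) := by ring
  rw [this]
  calc |(f x - f ((j:ℝ)/m)) - s j * (x - (j:ℝ)/m)|
      ≤ |f x - f ((j:ℝ)/m)| + |s j * (x - (j:ℝ)/m)| := abs_sub _ _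
    _ < ε/2 + ε/2 := add_lt_add hest1 habs
    _ = ε := by ring
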